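/- (Boundary flux for Riemann problem of Type 3.) If ρ_L ≤ Γ(ε_L), ρ_R > Γ(ε_R), and Q(ε_R, ρ_R) ≤ Q(ε_L, ρ_L), then min{D(ε_L, ρ_L), S(ε_R, ρ_R)} = Q(ε_R, ρ_R). -/

import Mathlib

theorem riemann_flux_type3
    (v_f ρ_j ρ_c : ℝ) (hvf : 0 < v_f) (hρj : 0 < ρ_j) (hρc : ρ_c ∈ Set.Ioo 0 ρ_j)
    (V : ℝ → ℝ) (hVcont : Continuous V) (hV0 : V 0 = v_f) (hVj : V ρ_j = 0)
    (hmono : MonotoneOn (fun r : ℝ => r * V r) (Set.Icc 0 ρ_c))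
    (hanti : AntitoneOn (fun r : ℝ => r * V r) (Set.Icc ρ_c ρ_j))
    (Q : ℝ → ℝ → ℝ) (hQ : ∀ ε ρ, Q ε ρ = ρ * V ((1 + ε) * ρ))
    (Γ : ℝ → ℝ) (hΓ : ∀ ε, Γ ε = ρ_c / (1 + ε))
    (cap : ℝ → ℝ) (hcap : ∀ ε, cap ε = Q ε (Γ ε))
    (S D : ℝ → ℝ → ℝ)
    (hS : ∀ ε ρ, S ε ρ = sSup (Q ε '' Set.Icc ρ (ρ_j / (1 + ε))))
    (hD : ∀ ε ρ, D ε ρ = sSup (Q ε '' Set.Icc 0 ρ))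
    (ε_L ε_R ρ_L ρ_R : ℝ) (hεL : 0 ≤ ε_L) (hεR : 0 ≤ ε_R)
    (hρL : ρ_L ∈ Set.Icc 0 (ρ_j / (1 + ε_L))) (hρR : ρ_R ∈ Set.Icc 0 (ρ_j / (1 + ε_R)))
    (h1 : ρ_L ≤ Γ ε_L) (h2 : Γ ε_R < ρ_R) (h3 : Q ε_R ρ_R ≤ Q ε_L ρ_L) :
    min (D ε_L ρ_L) (S ε_R ρ_R) = Q ε_R ρ_R := by
  have hεL1 : (0:ℝ) < 1 + ε_L := by linarith
  have hεR1 : (0:ℝ) < 1 + ε_R := by linarith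
  -- rewrite Q in terms of Q̄
  have hQbar : ∀ ε ρ, 0 < 1 + ε → Q ε ρ = ((1+ε)*ρ * V ((1+ε)*ρ)) / (1+ε) := by
    intro ε ρ hε
    rw [hQ]
    field_simp
  -- D side: Q ε_L is monotone on [0, ρ_L]
  have hDval : D ε_L ρ_L = Q ε_L ρ_L := by
    rw [hD]
    have hgreat : IsGreatest (Q ε_L '' Set.Icc 0 ρ_L) (Q ε_L ρ_L) := by
      constructor
      · exact ⟨ρ_L, ⟨hρL.1, le_refl _⟩, rfl⟩
      · rintro y ⟨x, ⟨hx0, hxL⟩, rfl⟩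
        rw [hQbar _ _ hεL1, hQbar _ _ hεL1]
        apply div_le_div_of_nonneg_right _ hεL1.le
        have hxc : (1+ε_L)*x ∈ Set.Icc 0 ρ_c := by
          constructor
          · positivity
          · have : ρ_L ≤ ρ_c / (1+ε_L) := by rw [← hΓ]; exact h1
            calc (1+ε_L)*x ≤ (1+ε_L)*ρ_L := by nlinarith
              _ ≤ ρ_c := by rw [le_div_iff₀ hεL1] at this; linarith
        have hLc : (1+ε_L)*ρ_L ∈ Set.Icc 0 ρ_c := by
          constructor
          · exact mul_nonneg hεL1.le hρL.1
          · have : ρ_L ≤ ρ_c / (1+ε_L) := by rw [← hΓ]; exact h1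
            rw [le_div_iff₀ hεL1] at this; linarith
        exact hmono hxc hLc (by nlinarith)
    exact hgreat.csSup_eq
  -- S side: Q ε_R is antitone on [ρ_R, ρ_j/(1+ε_R)]
  have hSval : S ε_R ρ_R = Q ε_R ρ_R := by
    rw [hS]
    have hgreat : IsGreatest (Q ε_R '' Set.Icc ρ_R (ρ_j / (1 + ε_R))) (Q ε_R ρ_R) := by
      constructor
      · exact ⟨ρ_R, ⟨le_refl _, hρR.2⟩, rfl⟩
      · rintro y ⟨x, ⟨hxR, hxj⟩, rfl⟩
        rw [hQbar _ _ hεR1, hQbar _ _ hεR1]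
        apply div_le_div_of_nonneg_right _ hεR1.le
        have hΓR : ρ_c / (1+ε_R) < ρ_R := by rw [← hΓ]; exact h2
        have hcR : ρ_c ≤ (1+ε_R)*ρ_R := by
          rw [div_lt_iff₀ hεR1] at hΓR; linarith
        have hxc : (1+ε_R)*x ∈ Set.Icc ρ_c ρ_j := by
          constructor
          · calc ρ_c ≤ (1+ε_R)*ρ_R := hcR
              _ ≤ (1+ε_R)*x := by nlinarith
          · rw [le_div_iff₀ hεR1] at hxj; linarith
        have hRc : (1+ε_R)*ρ_R ∈ Set.Icc ρ_c ρ_j := by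
          constructor
          · exact hcR
          · have := hρR.2; rw [le_div_iff₀ hεR1] at this; linarith
        exact hanti hRc hxc (by nlinarith)
    exact hgreat.csSup_eq
  rw [hDval, hSval]
  exact min_eq_right h3
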